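/- Consider the DAG τ with nodes {x, y, u, v, f₁, f₂, g}, where Vars(τ) = {x, y, u, v} and edges x→f₁, y→f₁, u→f₂, v→f₂, f₁→g, f₂→g. Then no subset T ⊆ τ is a tracking strategy for τ. -/

import Mathlib

/-- `T` is a tracking strategy for the protocol given by edge relation `E` and
variable set `Vars`, with `↝`-smallest element `tinit`. -/
def IsTrackingStrategy {V : Type*} (E : V → V → Prop) (Vars : Set V)
    (T : Set V) (tinit : V) : Prop :=
  tinit ∈ T ∧ (∀ u ∈ T, Relation.ReflTransGen E tinit u) ∧
  ∃ p : V → List V,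
    ∀ x ∈ Vars,
      (p x).head? = some x ∧
      (∃ t ∈ T, (p x).getLast? = some t) ∧
      List.Chain' E (p x) ∧
      ∀ y ∈ Vars, x ≠ y → ∀ w, w ∈ p x → w ∈ p y → w ∈ T

/-- The nodes of the protocol `g(f₁(x,y), f₂(u,v))`. -/
inductive N7 : Type
  | x | y | u | v | f1 | f2 | g
deriving DecidableEq

/-- The edges of the protocol `g(f₁(x,y), f₂(u,v))`. -/
def E7 : N7 → N7 → Prop := fun a b =>
  (a = N7.x ∧ b = N7.f1) ∨ (a = N7.y ∧ b = N7.f1) ∨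
  (a = N7.u ∧ b = N7.f2) ∨ (a = N7.v ∧ b = N7.f2) ∨
  (a = N7.f1 ∧ b = N7.g) ∨ (a = N7.f2 ∧ b = N7.g)

/-- A decidable over-approximation of reachability in `E7`. -/
def R7 : N7 → N7 → Bool
  | .x, b => b = .x || b = .f1 || b = .g
  | .y, b => b = .y || b = .f1 || b = .g
  | .u, b => b = .u || b = .f2 || b = .g
  | .v, b => b = .v || b = .f2 || b = .g
  | .f1, b => b = .f1 || b = .g
  | .f2, b => b = .f2 || b = .g
  | .g, b => b = .g

lemma R7_of_rtg {a b : N7} (h : Relation.ReflTransGen E7 a b) : R7 a b = true := by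
  induction h with
  | refl => cases a <;> decide
  | @tail b' c hbc hE ih =>
    rcases hE with ⟨h1, h2⟩ | ⟨h1, h2⟩ | ⟨h1, h2⟩ | ⟨h1, h2⟩ | ⟨h1, h2⟩ | ⟨h1, h2⟩ <;>
      subst h1 <;> subst h2 <;> revert ih <;> cases a <;> decide

lemma chain_rtg : ∀ (l : List N7) (a b : N7), l.Chain' E7 → l.head? = some a →
    l.getLast? = some b → Relation.ReflTransGen E7 a b := by
  intro l
  induction l with
  | nil => intro a b _ h; simp at h
  | cons c t ih =>
    intro a b hc hh hl
    simp at hh; subst hh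
    cases t with
    | nil => simp at hl; subst hl; exact Relation.ReflTransGen.refl
    | cons d r =>
      simp only [List.Chain', List.isChain_cons_cons] at hc
      rw [List.getLast?_cons_cons] at hl
      exact Relation.ReflTransGen.head hc.1 (ih d b hc.2 rfl hl)

lemma mem_f1 : ∀ (l : List N7) (a : N7), l.Chain' E7 → l.head? = some a →
    (a = N7.x ∨ a = N7.y) →
    (l.getLast? = some N7.f1 ∨ l.getLast? = some N7.g) → N7.f1 ∈ l := by
  intro l a hc hh ha hl
  cases l with
  | nil => simp at hh
  | cons c t =>
    simp at hh; subst hh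
    cases t with
    | nil =>
      simp at hl
      rcases ha with rfl | rfl <;> rcases hl with h | h <;> exact absurd h (by decide)
    | cons d r =>
      simp only [List.Chain', List.isChain_cons_cons] at hc
      have hd : d = N7.f1 := by
        rcases ha with rfl | rfl <;>
          rcases hc.1 with ⟨h1, h2⟩ | ⟨h1, h2⟩ | ⟨h1, h2⟩ | ⟨h1, h2⟩ | ⟨h1, h2⟩ | ⟨h1, h2⟩ <;>
          first | exact h2 | exact absurd h1 (by decide)
      subst hd
      simp

lemma mem_f2 : ∀ (l : List N7) (a : N7), l.Chain' E7 → l.head? = some a →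
    (a = N7.u ∨ a = N7.v) →
    (l.getLast? = some N7.f2 ∨ l.getLast? = some N7.g) → N7.f2 ∈ l := by
  intro l a hc hh ha hl
  cases l with
  | nil => simp at hh
  | cons c t =>
    simp at hh; subst hh
    cases t with
    | nil =>
      simp at hl
      rcases ha with rfl | rfl <;> rcases hl with h | h <;> exact absurd h (by decide)
    | cons d r =>
      simp only [List.Chain', List.isChain_cons_cons] at hc
      have hd : d = N7.f2 := by
        rcases ha with rfl | rfl <;>
          rcases hc.1 with ⟨h1, h2⟩ | ⟨h1, h2⟩ | ⟨h1, h2⟩ | ⟨h1, h2⟩ | ⟨h1, h2⟩ | ⟨h1, h2⟩ <;>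
          first | exact h2 | exact absurd h1 (by decide)
      subst hd
      simp

/-- No subset of the protocol `g(f₁(x,y), f₂(u,v))` is a tracking strategy. -/
theorem no_tracking_strategy :
    ¬ ∃ (T : Set N7) (tinit : N7),
      IsTrackingStrategy E7 {N7.x, N7.y, N7.u, N7.v} T tinit := by
  rintro ⟨T, tinit, htinit, hreach, p, hp⟩
  obtain ⟨hxh, ⟨tx, htxT, htxl⟩, hxc, hxd⟩ := hp N7.x (by simp)
  obtain ⟨hyh, ⟨ty, htyT, htyl⟩, hyc, hyd⟩ := hp N7.y (by simp)
  obtain ⟨huh, ⟨tu, htuT, htul⟩, huc, hud⟩ := hp N7.u (by simp)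
  obtain ⟨hvh, ⟨tv, htvT, htvl⟩, hvc, hvd⟩ := hp N7.v (by simp)
  have hRx : R7 N7.x tx = true := R7_of_rtg (chain_rtg _ _ _ hxc hxh htxl)
  have hRy : R7 N7.y ty = true := R7_of_rtg (chain_rtg _ _ _ hyc hyh htyl)
  have hRu : R7 N7.u tu = true := R7_of_rtg (chain_rtg _ _ _ huc huh htul)
  have hRv : R7 N7.v tv = true := R7_of_rtg (chain_rtg _ _ _ hvc hvh htvl)
  -- possible endpoints
  have hxcase : tx = N7.x ∨ tx = N7.f1 ∨ tx = N7.g := by revert hRx; cases tx <;> decide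
  have hycase : ty = N7.y ∨ ty = N7.f1 ∨ ty = N7.g := by revert hRy; cases ty <;> decide
  have hucase : tu = N7.u ∨ tu = N7.f2 ∨ tu = N7.g := by revert hRu; cases tu <;> decide
  have hvcase : tv = N7.v ∨ tv = N7.f2 ∨ tv = N7.g := by revert hRv; cases tv <;> decide
  -- if f2 ∈ T and tinit reaches a left-side node, contradiction (and symmetrically)
  -- first: no variable belongs to T
  have hnx : N7.x ∉ T := by
    intro hxT
    have h1 : R7 tinit N7.x = true := R7_of_rtg (hreach _ hxT)
    have h2 : tinit = N7.x := by revert h1; cases tinit <;> decide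
    subst h2
    -- tu, tv forced to g
    have h3 : R7 N7.x tu = true := R7_of_rtg (hreach _ htuT)
    have h4 : R7 N7.x tv = true := R7_of_rtg (hreach _ htvT)
    have h5 : tu = N7.g := by
      rcases hucase with rfl | rfl | rfl <;> first | rfl | exact absurd h3 (by decide)
    have h6 : tv = N7.g := by
      rcases hvcase with rfl | rfl | rfl <;> first | rfl | exact absurd h4 (by decide)
    have m1 : N7.f2 ∈ p N7.u := mem_f2 _ _ huc huh (Or.inl rfl) (Or.inr (h5 ▸ htul))
    have m2 : N7.f2 ∈ p N7.v := mem_f2 _ _ hvc hvh (Or.inr rfl) (Or.inr (h6 ▸ htvl))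
    have hf2T : N7.f2 ∈ T := hud N7.v (by simp) (by decide) N7.f2 m1 m2
    have : R7 N7.x N7.f2 = true := R7_of_rtg (hreach _ hf2T)
    exact absurd this (by decide)
  have hny : N7.y ∉ T := by
    intro hyT
    have h1 : R7 tinit N7.y = true := R7_of_rtg (hreach _ hyT)
    have h2 : tinit = N7.y := by revert h1; cases tinit <;> decide
    subst h2
    have h3 : R7 N7.y tu = true := R7_of_rtg (hreach _ htuT)
    have h4 : R7 N7.y tv = true := R7_of_rtg (hreach _ htvT)
    have h5 : tu = N7.g := by
      rcases hucase with rfl | rfl | rfl <;> first | rfl | exact absurd h3 (by decide)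
    have h6 : tv = N7.g := by
      rcases hvcase with rfl | rfl | rfl <;> first | rfl | exact absurd h4 (by decide)
    have m1 : N7.f2 ∈ p N7.u := mem_f2 _ _ huc huh (Or.inl rfl) (Or.inr (h5 ▸ htul))
    have m2 : N7.f2 ∈ p N7.v := mem_f2 _ _ hvc hvh (Or.inr rfl) (Or.inr (h6 ▸ htvl))
    have hf2T : N7.f2 ∈ T := hud N7.v (by simp) (by decide) N7.f2 m1 m2
    have : R7 N7.y N7.f2 = true := R7_of_rtg (hreach _ hf2T)
    exact absurd this (by decide)
  have hnu : N7.u ∉ T := by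
    intro huT
    have h1 : R7 tinit N7.u = true := R7_of_rtg (hreach _ huT)
    have h2 : tinit = N7.u := by revert h1; cases tinit <;> decide
    subst h2
    have h3 : R7 N7.u tx = true := R7_of_rtg (hreach _ htxT)
    have h4 : R7 N7.u ty = true := R7_of_rtg (hreach _ htyT)
    have h5 : tx = N7.g := by
      rcases hxcase with rfl | rfl | rfl <;> first | rfl | exact absurd h3 (by decide)
    have h6 : ty = N7.g := by
      rcases hycase with rfl | rfl | rfl <;> first | rfl | exact absurd h4 (by decide)
    have m1 : N7.f1 ∈ p N7.x := mem_f1 _ _ hxc hxh (Or.inl rfl) (Or.inr (h5 ▸ htxl))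
    have m2 : N7.f1 ∈ p N7.y := mem_f1 _ _ hyc hyh (Or.inr rfl) (Or.inr (h6 ▸ htyl))
    have hf1T : N7.f1 ∈ T := hxd N7.y (by simp) (by decide) N7.f1 m1 m2
    have : R7 N7.u N7.f1 = true := R7_of_rtg (hreach _ hf1T)
    exact absurd this (by decide)
  have hnv : N7.v ∉ T := by
    intro hvT
    have h1 : R7 tinit N7.v = true := R7_of_rtg (hreach _ hvT)
    have h2 : tinit = N7.v := by revert h1; cases tinit <;> decide
    subst h2
    have h3 : R7 N7.v tx = true := R7_of_rtg (hreach _ htxT)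
    have h4 : R7 N7.v ty = true := R7_of_rtg (hreach _ htyT)
    have h5 : tx = N7.g := by
      rcases hxcase with rfl | rfl | rfl <;> first | rfl | exact absurd h3 (by decide)
    have h6 : ty = N7.g := by
      rcases hycase with rfl | rfl | rfl <;> first | rfl | exact absurd h4 (by decide)
    have m1 : N7.f1 ∈ p N7.x := mem_f1 _ _ hxc hxh (Or.inl rfl) (Or.inr (h5 ▸ htxl))
    have m2 : N7.f1 ∈ p N7.y := mem_f1 _ _ hyc hyh (Or.inr rfl) (Or.inr (h6 ▸ htyl))
    have hf1T : N7.f1 ∈ T := hxd N7.y (by simp) (by decide) N7.f1 m1 m2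
    have : R7 N7.v N7.f1 = true := R7_of_rtg (hreach _ hf1T)
    exact absurd this (by decide)
  -- now f1 ∈ T
  have hf1 : N7.f1 ∈ T := by
    rcases hxcase with rfl | rfl | rfl
    · exact absurd htxT hnx
    · exact htxT
    · have m1 : N7.f1 ∈ p N7.x := mem_f1 _ _ hxc hxh (Or.inl rfl) (Or.inr htxl)
      rcases hycase with rfl | rfl | rfl
      · exact absurd htyT hny
      · exact htyT
      · have m2 : N7.f1 ∈ p N7.y := mem_f1 _ _ hyc hyh (Or.inr rfl) (Or.inr htyl)
        exact hxd N7.y (by simp) (by decide) N7.f1 m1 m2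
  have hf2 : N7.f2 ∈ T := by
    rcases hucase with rfl | rfl | rfl
    · exact absurd htuT hnu
    · exact htuT
    · have m1 : N7.f2 ∈ p N7.u := mem_f2 _ _ huc huh (Or.inl rfl) (Or.inr htul)
      rcases hvcase with rfl | rfl | rfl
      · exact absurd htvT hnv
      · exact htvT
      · have m2 : N7.f2 ∈ p N7.v := mem_f2 _ _ hvc hvh (Or.inr rfl) (Or.inr htvl)
        exact hud N7.v (by simp) (by decide) N7.f2 m1 m2
  have r1 : R7 tinit N7.f1 = true := R7_of_rtg (hreach _ hf1)
  have r2 : R7 tinit N7.f2 = true := R7_of_rtg (hreach _ hf2)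
  revert r1 r2; cases tinit <;> decide
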